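/- Let φ be a CM Drinfeld F_q[θ]-module of rank r defined over K̄ whose leading coefficient is 1, with period lattice A^r wz' for w ∈ C_∞^×, z' ∈ Ω^r, and suppose the (i,j)-cofactor L_{ij}(wz') of its period matrix is nonzero for some 1 ≤ i ≤ r−1, 1 ≤ j ≤ r. Then, given that the set S' = { w/π̃, F_τ(w)/π̃, …, F_{τ^{r−1}}(w)/π̃ } is algebraically independent over K̄ and that det(P_{wz'}) = − π̃/((−1)^{r−1})^{1/(q−1)}, the quantity 𝔔 := (w/π̃)^ℓ · (L_{ij}(wz')/π̃) is transcendental over K̄ for every integer ℓ ≥ 0, where each entry of the period matrix P_{wz'} is a homogeneous degree-1 K̄-polynomial in w, F_τ(w), …, F_{τ^{r−1}}(w). -/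

import Mathlib

open MvPolynomial

lemma aux_aeval_homog {K C : Type*} [CommSemiring K] [CommSemiring C] [Algebra K C]
    {σ : Type*} {p : MvPolynomial σ K} {n : ℕ} (hp : p.IsHomogeneous n)
    (c : C) (y : σ → C) :
    MvPolynomial.aeval (fun k => c * y k) p = c ^ n * MvPolynomial.aeval y p := by
  classical
  rw [aeval_def, aeval_def, eval₂_eq, eval₂_eq, Finset.mul_sum]
  refine Finset.sum_congr rfl fun d hd => ?_
  have hdn : d.degree = n := by
    rw [Finsupp.degree_eq_weight_one]
    exact hp (mem_support_iff.mp hd)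
  have : (∏ i ∈ d.support, (c * y i) ^ d i)
      = c ^ n * ∏ i ∈ d.support, (y i) ^ d i := by
    rw [← hdn, Finsupp.degree_apply, ← Finset.prod_pow_eq_pow_sum, ← Finset.prod_mul_distrib]
    exact Finset.prod_congr rfl fun i _ => mul_pow _ _ _
  rw [this]; ring

lemma aux_det_homog {K : Type*} [CommRing K] {σ : Type*} {n : ℕ}
    (M : Matrix (Fin n) (Fin n) (MvPolynomial σ K)) (d : Fin n → ℕ)
    (h : ∀ a b, (M a b).IsHomogeneous (d a)) :
    M.det.IsHomogeneous (∑ a, d a) := by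
  rw [Matrix.det_apply]
  refine MvPolynomial.IsHomogeneous.sum _ _ _ fun σ' _ => ?_
  have h1 : (∏ a, M (σ' a) a).IsHomogeneous (∑ a, d (σ' a)) :=
    MvPolynomial.IsHomogeneous.prod _ _ _ fun a _ => h (σ' a) a
  rw [Equiv.sum_comp σ' d] at h1
  rcases Int.units_eq_one_or (Equiv.Perm.sign σ') with hs | hs <;> rw [hs]
  · simpa using h1
  · simpa using h1.neg


/-- Proposition 6.6 (P:T1): let `φ` be a CM Drinfeld `F_q[θ]`-module of rank `r` over `K̄`
with leading coefficient `1` and period lattice `A^r w z'`.  Each entry of its period matrix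
`P = P_{wz'}` is a homogeneous degree-`1` `K̄`-polynomial evaluated at the vector
`x = (w, F_τ(w), …, F_{τ^{r-1}}(w))`; the set `{w/π̃, F_τ(w)/π̃, …, F_{τ^{r-1}}(w)/π̃}` is
algebraically independent over `K̄`, and `det P = -π̃/ρ` with `ρ^{q-1} = (-1)^{r-1}`.
If the `(i,j)`-cofactor `L_{ij}(wz') = adjugate P j i` is nonzero (`1 ≤ i ≤ r-1`), then
`𝔔 = (w/π̃)^ℓ ⬝ (L_{ij}(wz')/π̃)` is transcendental over `K̄` for every integer `ℓ ≥ 0`. -/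
theorem stmt18 {K C : Type*} [Field K] [Field C] [Algebra K C]
    (halgcl : ∀ y : C, IsAlgebraic K y → ∃ a : K, algebraMap K C a = y)
    (q r : ℕ) (hq : 2 ≤ q) (hr : 2 ≤ r)
    (x : Fin r → C) (π : C) (hπ : π ≠ 0)
    (hind : AlgebraicIndependent K (fun k => x k / π))
    (Pm : Matrix (Fin r) (Fin r) (MvPolynomial (Fin r) K))
    (hhom : ∀ i j, (Pm i j).IsHomogeneous 1)
    (P : Matrix (Fin r) (Fin r) C)
    (hP : ∀ i j, P i j = MvPolynomial.aeval x (Pm i j))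
    (ρ : C) (hρ0 : ρ ≠ 0) (hρ : ρ ^ (q - 1) = (-1 : C) ^ (r - 1))
    (hdet : P.det = -π / ρ)
    (i j : Fin r) (hi : (i : ℕ) < r - 1)
    (hL : P.adjugate j i ≠ 0)
    (i₀ : Fin r) (w : C) (hw : w = x i₀) (ℓ : ℕ) :
    Transcendental K ((w / π) ^ ℓ * (P.adjugate j i / π)) := by
  classical
  obtain ⟨s, rfl⟩ : ∃ s, r = s + 2 := ⟨r - 2, by omega⟩
  set y : Fin (s + 2) → C := fun k => x k / π with hy
  -- ρ is algebraic over K, hence (effectively) in K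
  have hρalg : IsAlgebraic K ρ := by
    refine ⟨Polynomial.X ^ (q - 1) - Polynomial.C ((-1 : K) ^ (s + 1)), ?_, ?_⟩
    · exact Polynomial.X_pow_sub_C_ne_zero (by omega) _
    · have h21 : (s + 2) - 1 = s + 1 := by omega
      rw [h21] at hρ
      simp [hρ]
  obtain ⟨c, hc⟩ := halgcl ρ hρalg
  -- the rescaled matrix
  set M : Matrix (Fin (s + 2)) (Fin (s + 2)) C := Pm.map (MvPolynomial.aeval y) with hM
  have hxy : (fun k => π * y k) = x := by
    funext k
    simp [hy, mul_div_cancel₀ _ hπ]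
  have hPM : P = π • M := by
    ext a b
    rw [hP]
    have := aux_aeval_homog (hhom a b) π y
    rw [hxy] at this
    simp [this, hM, Matrix.map_apply]
  set Dy : C := MvPolynomial.aeval y Pm.det with hDy
  set Ay : C := MvPolynomial.aeval y (Pm.adjugate j i) with hAy
  have hMdet : M.det = Dy := by
    rw [hDy, AlgHom.map_det]; rfl
  have hMadj : M.adjugate j i = Ay := by
    have h := (AlgHom.map_adjugate
      (MvPolynomial.aeval y : MvPolynomial (Fin (s+2)) K →ₐ[K] C) Pm).symm
    have h2 := congrFun (congrFun (congrArg (fun N => (N : Matrix _ _ C)) h) j) i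
    simpa [hM, hAy, AlgHom.mapMatrix_apply, Matrix.map_apply] using h2
  -- determinant relation
  have hPdet : π ^ (s + 2) * Dy = -π / ρ := by
    rw [← hdet, hPM, Matrix.det_smul, hMdet]
    simp [Fintype.card_fin]
  have key : π ^ (s + 1) * Dy * ρ = -1 := by
    apply mul_left_cancel₀ hπ
    field_simp at hPdet
    linear_combination hPdet
  -- adjugate relation
  have hadj : P.adjugate j i = π ^ (s + 1) * Ay := by
    rw [hPM, Matrix.adjugate_smul]
    simp [Fintype.card_fin, hMadj]
  have hAy0 : Ay ≠ 0 := by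
    intro h0
    exact hL (by rw [hadj, h0, mul_zero])
  -- suppose the quantity is algebraic
  intro halg
  obtain ⟨a, ha⟩ := halgcl _ halg
  have hQval : (w / π) ^ ℓ * (P.adjugate j i / π) = y i₀ ^ ℓ * (π ^ s * Ay) := by
    rw [hw, hadj]
    have hdiv : π ^ (s + 1) * Ay / π = π ^ s * Ay := by
      field_simp; ring
    rw [hdiv]
  rw [hQval] at ha
  -- the key identity in C
  have key' : (π ^ (s + 1) * Dy * ρ) ^ s = (-1 : C) ^ s := by rw [key]
  have hneg1 : (algebraMap K C) (-1 : K) = -1 := by simp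
  have hE : (algebraMap K C) a ^ (s + 1) * (algebraMap K C) c ^ s * Dy ^ s
      = (algebraMap K C) (-1 : K) ^ s * (y i₀ ^ (ℓ * (s + 1)) * Ay ^ (s + 1)) := by
    rw [ha, hc, hneg1, ← key']
    ring
  -- transfer to polynomials
  set F : MvPolynomial (Fin (s + 2)) K :=
    MvPolynomial.C (a ^ (s + 1) * c ^ s) * Pm.det ^ s
      - MvPolynomial.C ((-1 : K) ^ s)
          * (MvPolynomial.X i₀ ^ (ℓ * (s + 1)) * Pm.adjugate j i ^ (s + 1)) with hF
  have hFeval : MvPolynomial.aeval y F = 0 := by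
    rw [hF]
    simp only [map_sub, map_mul, map_pow, MvPolynomial.aeval_C, MvPolynomial.aeval_X]
    rw [← hDy, ← hAy, sub_eq_zero]
    exact hE
  have hF0 : F = 0 := by
    apply hind
    rw [map_zero]
    exact hFeval
  -- F = 0 is impossible, by homogeneity
  have hEq : MvPolynomial.C ((-1 : K) ^ s)
      * (MvPolynomial.X i₀ ^ (ℓ * (s + 1)) * Pm.adjugate j i ^ (s + 1))
      = MvPolynomial.C (a ^ (s + 1) * c ^ s) * Pm.det ^ s :=
    (sub_eq_zero.mp hF0).symm
  have hadjp0 : Pm.adjugate j i ≠ 0 := by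
    intro h0
    exact hAy0 (by rw [hAy, h0, map_zero])
  have hne : MvPolynomial.C ((-1 : K) ^ s)
      * (MvPolynomial.X i₀ ^ (ℓ * (s + 1)) * Pm.adjugate j i ^ (s + 1)) ≠ 0 := by
    apply mul_ne_zero
    · simp [MvPolynomial.C_eq_zero]
    · exact mul_ne_zero (pow_ne_zero _ (MvPolynomial.X_ne_zero _))
        (pow_ne_zero _ hadjp0)
  have hdetH : Pm.det.IsHomogeneous (s + 2) := by
    have h := aux_det_homog Pm (fun _ => 1) (fun a b => hhom a b)
    simpa using h
  have hrows : ∀ a b, ((Pm.updateRow i (Pi.single j 1)) a b).IsHomogeneous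
      (if a = i then 0 else 1) := by
    intro a b
    rcases eq_or_ne a i with rfl | hai
    · simp only [Matrix.updateRow_self, if_pos rfl]
      rw [Pi.single_apply]
      split
      · exact MvPolynomial.isHomogeneous_one _ _
      · exact MvPolynomial.isHomogeneous_zero _ _ _
    · rw [Matrix.updateRow_ne hai, if_neg hai]
      exact hhom a b
  have hsum : (∑ a : Fin (s + 2), if a = i then 0 else 1) = s + 1 := by
    simp [Finset.sum_ite, Finset.filter_ne']
  have hadjH : (Pm.adjugate j i).IsHomogeneous (s + 1) := by
    rw [Matrix.adjugate_apply]
    have h := aux_det_homog _ _ hrows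
    rwa [hsum] at h
  have h1 : (MvPolynomial.C ((-1 : K) ^ s)
      * (MvPolynomial.X i₀ ^ (ℓ * (s + 1)) * Pm.adjugate j i ^ (s + 1))).IsHomogeneous
      (ℓ * (s + 1) + (s + 1) * (s + 1)) :=
    ((MvPolynomial.isHomogeneous_X_pow i₀ (ℓ * (s + 1))).mul (hadjH.pow (s + 1))).C_mul _
  have h2 : (MvPolynomial.C ((-1 : K) ^ s)
      * (MvPolynomial.X i₀ ^ (ℓ * (s + 1)) * Pm.adjugate j i ^ (s + 1))).IsHomogeneous
      ((s + 2) * s) := by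
    rw [hEq]
    exact (hdetH.pow s).C_mul _
  have hdeg : ℓ * (s + 1) + (s + 1) * (s + 1) = (s + 2) * s :=
    h1.inj_right h2 hne
  nlinarith [hdeg]
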